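/- Let 𝒳 ⊆ ℝ^d be a nonempty closed convex set of diameter at most D, let G > 0 and μ > 0. For t = 1, …, T, let S_t be nonempty closed convex subsets with 𝒳 = S_0 ⊇ S_1 ⊇ ⋯ ⊇ S_T, let f_t : ℝ^d → ℝ, and let h_t ∈ ℝ^d satisfy ‖h_t‖ ≤ G and the μ-strong-convexity subgradient inequality f_t(y) ≥ f_t(x_t) + ⟨h_t, y − x_t⟩ + (μ/2)‖y − x_t‖² for all y ∈ 𝒳. Run Nested Projected OGD with step sizes η_t = 1/(μt): x_1 ∈ 𝒳 and x_{t+1} = Π_{S_t}(x_t − η_t h_t). Then for every x* ∈ S_T: Σ_{t=1}^{T} (f_t(x_t) − f_t(x*)) ≤ (G²/(2μ)) · (1 + log T). -/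

import Mathlib

open scoped RealInnerProductSpace

lemma proj_dist_le_aux {E : Type*} [NormedAddCommGroup E] [InnerProductSpace ℝ E]
    (z p w : E) (hp : ⟪z - p, w - p⟫ ≤ 0) : ‖p - w‖ ^ 2 ≤ ‖z - w‖ ^ 2 := by
  have hzw : z - w = (z - p) + (p - w) := by abel
  have hexp := norm_add_sq_real (z - p) (p - w)
  have h2 : ⟪z - p, p - w⟫ = -⟪z - p, w - p⟫ := by
    rw [← inner_neg_right]; congr 1; abel
  rw [hzw, hexp, h2]
  nlinarith [sq_nonneg ‖z - p‖]

/-- Regret bound for Nested Projected OGD with step sizes `η_t = 1/(μt)` for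
`μ`-strongly convex losses: the regret is at most `(G²/(2μ))(1 + log T)`. -/
theorem np_ogd_regret_strongly_convex (d T : ℕ) (D G μ : ℝ)
    (hD : 0 ≤ D) (hG : 0 < G) (hμ : 0 < μ)
    (X : Set (EuclideanSpace ℝ (Fin d)))
    (hXne : X.Nonempty) (hXcl : IsClosed X) (hXcv : Convex ℝ X)
    (hXdiam : ∀ u ∈ X, ∀ v ∈ X, ‖u - v‖ ≤ D)
    (S : ℕ → Set (EuclideanSpace ℝ (Fin d)))
    (hS0 : S 0 = X)
    (hSne : ∀ t, t ≤ T → (S t).Nonempty)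
    (hScl : ∀ t, t ≤ T → IsClosed (S t))
    (hScv : ∀ t, t ≤ T → Convex ℝ (S t))
    (hSnest : ∀ t, t < T → S (t + 1) ⊆ S t)
    (f : ℕ → EuclideanSpace ℝ (Fin d) → ℝ)
    (h x : ℕ → EuclideanSpace ℝ (Fin d))
    (hh : ∀ t, 1 ≤ t → t ≤ T → ‖h t‖ ≤ G)
    (hsub : ∀ t, 1 ≤ t → t ≤ T → ∀ y ∈ X,
      f t y ≥ f t (x t) + ⟪h t, y - x t⟫ + μ / 2 * ‖y - x t‖ ^ 2)
    (hx1 : x 1 ∈ X)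
    (hproj : ∀ t, 1 ≤ t → t ≤ T → x (t + 1) ∈ S t ∧
      ∀ y ∈ S t, ⟪(x t - (1 / (μ * t)) • h t) - x (t + 1), y - x (t + 1)⟫ ≤ 0)
    (xstar : EuclideanSpace ℝ (Fin d)) (hxstar : xstar ∈ S T) :
    ∑ t ∈ Finset.Icc 1 T, (f t (x t) - f t xstar) ≤
      G ^ 2 / (2 * μ) * (1 + Real.log T) := by
  -- xstar belongs to every S t, t ≤ T
  have hmemS : ∀ t, t ≤ T → xstar ∈ S t := by
    have key : ∀ k, k ≤ T → xstar ∈ S (T - k) := by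
      intro k
      induction k with
      | zero => intro _; simpa using hxstar
      | succ n ih =>
        intro hk
        have h2 : T - (n + 1) + 1 = T - n := by omega
        have hnest := hSnest (T - (n + 1)) (by omega)
        rw [h2] at hnest
        exact hnest (ih (by omega))
    intro t ht
    have := key (T - t) (Nat.sub_le T t)
    rwa [Nat.sub_sub_self ht] at this
  have hxstarX : xstar ∈ X := by rw [← hS0]; exact hmemS 0 (Nat.zero_le T)
  set a : ℕ → ℝ := fun t => ‖x t - xstar‖ ^ 2 with ha
  have hanonneg : ∀ t, 0 ≤ a t := fun t => sq_nonneg _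
  -- per-step bound
  have key : ∀ t, 1 ≤ t → t ≤ T →
      f t (x t) - f t xstar ≤
        (μ * t / 2 * (a t - a (t + 1)) - μ / 2 * a t) + G ^ 2 / (2 * μ * t) := by
    intro t h1 h2
    have htpos : (0 : ℝ) < (t : ℝ) := by exact_mod_cast h1
    set η : ℝ := 1 / (μ * t) with hη
    have hηpos : 0 < η := by positivity
    obtain ⟨hmem, hpi⟩ := hproj t h1 h2
    have hpw : a (t + 1) ≤ ‖(x t - η • h t) - xstar‖ ^ 2 :=
      proj_dist_le_aux _ _ _ (hpi xstar (hmemS t h2))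
    have hexp : ‖(x t - η • h t) - xstar‖ ^ 2
        = a t - 2 * η * ⟪h t, x t - xstar⟫ + η ^ 2 * ‖h t‖ ^ 2 := by
      have hrw : (x t - η • h t) - xstar = (x t - xstar) - η • h t := by abel
      rw [hrw, norm_sub_sq_real, real_inner_smul_right, norm_smul,
        Real.norm_eq_abs, abs_of_pos hηpos, real_inner_comm]
      ring
    have hG2 : ‖h t‖ ^ 2 ≤ G ^ 2 := by
      have := hh t h1 h2
      nlinarith [norm_nonneg (h t)]
    have hdot : ⟪h t, x t - xstar⟫ ≤ (a t - a (t + 1)) / (2 * η) + η / 2 * G ^ 2 := by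
      rw [hexp] at hpw
      have h3 : 2 * η * ⟪h t, x t - xstar⟫ ≤ a t - a (t + 1) + η ^ 2 * G ^ 2 := by
        nlinarith [hpw, hG2, sq_nonneg η]
      have h4 : (a t - a (t + 1)) / (2 * η) + η / 2 * G ^ 2
          = (a t - a (t + 1) + η ^ 2 * G ^ 2) / (2 * η) := by
        field_simp
      rw [h4, le_div_iff₀ (by positivity)]
      nlinarith [h3]
    have hs := hsub t h1 h2 xstar hxstarX
    have hsym : ⟪h t, xstar - x t⟫ = -⟪h t, x t - xstar⟫ := by
      rw [← inner_neg_right]; congr 1; abel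
    have hnrm : ‖xstar - x t‖ = ‖x t - xstar‖ := norm_sub_rev _ _
    rw [hsym, hnrm] at hs
    -- f t (x t) - f t xstar ≤ ⟪h t, x t - xstar⟫ - μ/2 * a t
    have hfb : f t (x t) - f t xstar ≤ ⟪h t, x t - xstar⟫ - μ / 2 * a t := by
      simp only [ha]; linarith [hs]
    have heq1 : (a t - a (t + 1)) / (2 * η) = μ * t / 2 * (a t - a (t + 1)) := by
      rw [hη]; field_simp
    have heq2 : η / 2 * G ^ 2 = G ^ 2 / (2 * μ * t) := by
      rw [hη]; field_simp
    calc f t (x t) - f t xstar ≤ ⟪h t, x t - xstar⟫ - μ / 2 * a t := hfb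
      _ ≤ ((a t - a (t + 1)) / (2 * η) + η / 2 * G ^ 2) - μ / 2 * a t := by linarith [hdot]
      _ = (μ * t / 2 * (a t - a (t + 1)) - μ / 2 * a t) + G ^ 2 / (2 * μ * t) := by
          rw [heq1, heq2]; ring
  -- telescoping part
  set g : ℕ → ℝ := fun s => μ * s / 2 * a (s + 1) with hg
  have htel : ∑ t ∈ Finset.Icc 1 T, (μ * t / 2 * (a t - a (t + 1)) - μ / 2 * a t) ≤ 0 := by
    rw [← Finset.Ico_add_one_right_eq_Icc, Finset.sum_Ico_eq_sum_range]
    have hterm : ∀ i,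
        μ * (↑(1 + i)) / 2 * (a (1 + i) - a (1 + i + 1)) - μ / 2 * a (1 + i)
          = g i - g (i + 1) := by
      intro i
      simp only [hg]
      push_cast
      have : 1 + i + 1 = i + 1 + 1 := by omega
      rw [this, show 1 + i = i + 1 from by omega]
      ring
    rw [Finset.sum_congr rfl (fun i _ => hterm i), Finset.sum_range_sub']
    have hg0 : g 0 = 0 := by simp [hg]
    have hgT : 0 ≤ g T := by
      have := hanonneg (T + 1)
      have : (0:ℝ) ≤ μ * T / 2 * a (T + 1) := by positivity
      simpa [hg] using this
    simp only [Nat.add_sub_cancel]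
    linarith
  -- harmonic part
  have hharm : ∑ t ∈ Finset.Icc 1 T, G ^ 2 / (2 * μ * t) ≤ G ^ 2 / (2 * μ) * (1 + Real.log T) := by
    have hH : ∑ t ∈ Finset.Icc 1 T, ((t : ℝ))⁻¹ ≤ 1 + Real.log T := by
      have hb := harmonic_le_one_add_log T
      rw [harmonic_eq_sum_Icc] at hb
      push_cast at hb
      exact hb
    have hrw : ∀ t ∈ Finset.Icc 1 T, G ^ 2 / (2 * μ * t) = G ^ 2 / (2 * μ) * ((t : ℝ))⁻¹ := by
      intro t ht
      rw [div_mul_eq_div_div]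
      rw [div_eq_mul_inv (G ^ 2 / (2 * μ))]
    rw [Finset.sum_congr rfl hrw, ← Finset.mul_sum]
    have hc : (0:ℝ) ≤ G ^ 2 / (2 * μ) := by positivity
    exact mul_le_mul_of_nonneg_left hH hc
  calc ∑ t ∈ Finset.Icc 1 T, (f t (x t) - f t xstar)
      ≤ ∑ t ∈ Finset.Icc 1 T,
        ((μ * t / 2 * (a t - a (t + 1)) - μ / 2 * a t) + G ^ 2 / (2 * μ * t)) := by
        refine Finset.sum_le_sum ?_
        intro t ht
        rw [Finset.mem_Icc] at ht
        exact key t ht.1 ht.2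
    _ = (∑ t ∈ Finset.Icc 1 T, (μ * t / 2 * (a t - a (t + 1)) - μ / 2 * a t))
        + ∑ t ∈ Finset.Icc 1 T, G ^ 2 / (2 * μ * t) := Finset.sum_add_distrib
    _ ≤ 0 + G ^ 2 / (2 * μ) * (1 + Real.log T) := add_le_add htel hharm
    _ = G ^ 2 / (2 * μ) * (1 + Real.log T) := by ring
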